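/- (Convergence of level sets under epi-convergence, Colesanti–Ludwig–Mussnig) Let u : ℝⁿ → ℝ ∪ {+∞} be a lower semicontinuous convex function with u(x) → +∞ as |x| → +∞, and let u_n : ℝⁿ → ℝ ∪ {+∞} be lower semicontinuous convex functions with u_n(x) → +∞ as |x| → +∞ for each n, such that u_n epi-converges to u. Then for every t ≠ min_{x∈ℝⁿ} u(x), the sublevel sets {u_n ≤ t} converge to {u ≤ t} in Hausdorff distance. -/
import Mathlib


open Filter

/-- Painlevé–Kuratowski convergence of a sequence of sets: every point of the limit is a
limit of a sequence of points of the `A_n`, and every limit of points along a subsequence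
belongs to the limit set. -/
def PKConv {X : Type*} [TopologicalSpace X] (A : ℕ → Set X) (L : Set X) : Prop :=
  (∀ x ∈ L, ∃ y : ℕ → X, (∀ m, y m ∈ A m) ∧ Tendsto y atTop (nhds x)) ∧
    (∀ (φ : ℕ → ℕ) (y : ℕ → X), StrictMono φ → (∀ m, y m ∈ A (φ m)) →
      ∀ x : X, Tendsto y atTop (nhds x) → x ∈ L)

/-- Epigraph of an extended-real-valued function. -/
def epiSet {n : ℕ} (u : EuclideanSpace ℝ (Fin n) → EReal) :
    Set (EuclideanSpace ℝ (Fin n) × ℝ) :=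
  {p | u p.1 ≤ (p.2 : EReal)}

/-- (Colesanti–Ludwig–Mussnig.) If coercive lower semicontinuous convex functions `u_m`
epi-converge to a coercive lower semicontinuous convex function `u`, then for every
`t ≠ min u` the sublevel sets `{u_m ≤ t}` converge to `{u ≤ t}` in Hausdorff distance. -/
theorem sublevel_hausdorff_convergence_of_epiConvergence {n : ℕ}
    (u : EuclideanSpace ℝ (Fin n) → EReal) (uN : ℕ → EuclideanSpace ℝ (Fin n) → EReal)
    (hlsc : LowerSemicontinuous u) (hconv : Convex ℝ (epiSet u))
    (hcoer : Tendsto u (cocompact (EuclideanSpace ℝ (Fin n))) (nhds ⊤))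
    (hlscN : ∀ m, LowerSemicontinuous (uN m)) (hconvN : ∀ m, Convex ℝ (epiSet (uN m)))
    (hcoerN : ∀ m, Tendsto (uN m) (cocompact (EuclideanSpace ℝ (Fin n))) (nhds ⊤))
    (hepi : PKConv (fun m => epiSet (uN m)) (epiSet u))
    (t : ℝ) (ht : (t : EReal) ≠ ⨅ x, u x) :
    Tendsto (fun m => Metric.hausdorffDist {x | uN m x ≤ (t : EReal)} {x | u x ≤ (t : EReal)})
      atTop (nhds 0) := by
  classical
  let E := EuclideanSpace ℝ (Fin n)
  set K : Set E := {x | u x ≤ (t : EReal)} with hKdef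
  -- trivial case: empty limit sublevel set
  rcases Set.eq_empty_or_nonempty K with hKe | hKne
  · have : ∀ m, Metric.hausdorffDist {x | uN m x ≤ (t : EReal)} K = 0 := fun m => by
      rw [hKe]; exact Metric.hausdorffDist_empty
    simp only [this]
    exact tendsto_const_nhds
  -- a point with value strictly below t
  have hinf : (⨅ x, u x) < (t : EReal) := by
    rcases hKne with ⟨x, hx⟩
    exact lt_of_le_of_ne (le_trans (iInf_le _ x) hx) (Ne.symm ht)
  obtain ⟨p₀, hp₀⟩ : ∃ x, u x < (t : EReal) := iInf_lt_iff.1 hinf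
  -- approximating sequences for points with value < t
  have key : ∀ p : E, u p < (t : EReal) → ∃ q : ℕ → E,
      Tendsto q atTop (nhds p) ∧ ∀ᶠ m in atTop, uN m (q m) ≤ (t : EReal) := by
    intro p hp
    obtain ⟨s, hs1, hs2⟩ := EReal.exists_between_coe_real hp
    obtain ⟨y, hy, hyt⟩ := hepi.1 (p, s) hs1.le
    refine ⟨fun m => (y m).1, (continuous_fst.tendsto _).comp hyt, ?_⟩
    have h2 : Tendsto (fun m => (y m).2) atTop (nhds s) := (continuous_snd.tendsto _).comp hyt
    have hs2' : s < t := by exact_mod_cast hs2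
    filter_upwards [h2.eventually_lt_const hs2'] with m hm
    exact le_trans (hy m) (by exact_mod_cast hm.le)
  -- limit points of sublevel sequences belong to K
  have limpt : ∀ (φ : ℕ → ℕ) (z : ℕ → E), StrictMono φ →
      (∀ k, uN (φ k) (z k) ≤ (t : EReal)) → ∀ x, Tendsto z atTop (nhds x) → x ∈ K := by
    intro φ z hφ hz x hx
    exact hepi.2 φ (fun k => (z k, t)) hφ (fun k => hz k) (x, t)
      (hx.prodMk_nhds tendsto_const_nhds)
  -- value ≤ t on segments
  have seg : ∀ (v : E → EReal), Convex ℝ (epiSet v) → ∀ a b : E, v a ≤ (t : EReal) →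
      v b ≤ (t : EReal) → ∀ θ ∈ Set.Icc (0:ℝ) 1, v (a + θ • (b - a)) ≤ (t : EReal) := by
    intro v hv a b ha hb θ hθ
    have hmem : ((a, t) : E × ℝ) + θ • ((b, t) - (a, t)) ∈ epiSet v := by
      apply hv.segment_subset (x := (a, t)) (y := (b, t)) ha hb
      rw [segment_eq_image']
      exact ⟨θ, hθ, rfl⟩
    have heq : ((a, t) : E × ℝ) + θ • ((b, t) - (a, t)) = (a + θ • (b - a), t) := by
      ext <;> simp [Prod.smul_def]
    rwa [heq] at hmem
  -- coercivity of u: a bound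
  obtain ⟨C, hC, hCu⟩ : ∃ C : Set E, IsCompact C ∧ ∀ x ∉ C, (t : EReal) < u x := by
    have := hcoer.eventually (Ioi_mem_nhds (EReal.coe_lt_top t))
    rw [Filter.hasBasis_cocompact.eventually_iff] at this
    obtain ⟨C, hC1, hC2⟩ := this
    exact ⟨C, hC1, fun x hx => hC2 hx⟩
  obtain ⟨R₀, hR₀⟩ := hC.isBounded.subset_closedBall 0
  set R : ℝ := max R₀ ‖p₀‖ + 1 with hRdef
  have hRR₀ : R₀ < R := by
    have := le_max_left R₀ ‖p₀‖; simp [hRdef]; linarith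
  have hp₀R : ‖p₀‖ < R := by
    have := le_max_right R₀ ‖p₀‖; simp [hRdef]; linarith
  have hRbig : ∀ x : E, R ≤ ‖x‖ → (t : EReal) < u x := by
    intro x hx
    refine hCu x fun hxC => ?_
    have := hR₀ hxC
    rw [Metric.mem_closedBall, dist_zero_right] at this
    linarith
  have hKR : K ⊆ Metric.closedBall 0 R := by
    intro x hx
    rw [Metric.mem_closedBall, dist_zero_right]
    by_contra h
    exact absurd hx (not_le.2 (hRbig x (by linarith [not_le.1 h])))
  -- uniform boundedness of the approximating sublevel sets
  obtain ⟨q₀, hq₀t, hq₀⟩ := key p₀ hp₀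
  have hq₀R : ∀ᶠ m in atTop, ‖q₀ m‖ < R := by
    have : Tendsto (fun m => ‖q₀ m‖) atTop (nhds ‖p₀‖) := (continuous_norm.tendsto _).comp hq₀t
    exact this.eventually_lt_const hp₀R
  have hbd : ∀ᶠ m in atTop, ∀ z : E, uN m z ≤ (t : EReal) → ‖z‖ < R := by
    by_contra hcon
    rw [Filter.not_eventually] at hcon
    have hfreq : ∃ᶠ m in atTop, (∃ z : E, uN m z ≤ (t : EReal) ∧ R ≤ ‖z‖) ∧
        (uN m (q₀ m) ≤ (t : EReal) ∧ ‖q₀ m‖ < R) := by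
      apply (hcon.mono ?_).and_eventually (hq₀.and hq₀R)
      intro m hm
      push_neg at hm
      obtain ⟨z, hz1, hz2⟩ := hm
      exact ⟨z, hz1, hz2⟩
    obtain ⟨φ, hφ, hP⟩ := extraction_of_frequently_atTop hfreq
    choose z hz1 hz2 using fun k => (hP k).1
    -- find points on the sphere of radius R
    have hw : ∀ k, ∃ w : E, ‖w‖ = R ∧ uN (φ k) w ≤ (t : EReal) := by
      intro k
      obtain ⟨hq1, hq2⟩ := (hP k).2
      set a := q₀ (φ k)
      have hcont : ContinuousOn (fun θ : ℝ => ‖a + θ • (z k - a)‖) (Set.Icc 0 1) :=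
        ((continuous_const.add (continuous_id.smul continuous_const)).norm).continuousOn
      have hIcc : R ∈ Set.Icc ‖a + (0:ℝ) • (z k - a)‖ ‖a + (1:ℝ) • (z k - a)‖ := by
        constructor
        · simp; linarith
        · simpa using hz2 k
      obtain ⟨θ, hθ, hθR⟩ := intermediate_value_Icc (zero_le_one) hcont hIcc
      exact ⟨a + θ • (z k - a), hθR, seg _ (hconvN (φ k)) a (z k) hq1 (hz1 k) θ hθ⟩
    choose w hw1 hw2 using hw
    have hwmem : ∀ k, w k ∈ Metric.sphere (0:E) R := by
      intro k; rw [mem_sphere_zero_iff_norm]; exact hw1 k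
    obtain ⟨x, hxmem, ψ, hψ, hxt⟩ := (isCompact_sphere (0:E) R).tendsto_subseq hwmem
    have hxK : x ∈ K := limpt (φ ∘ ψ) (w ∘ ψ) (hφ.comp hψ) (fun k => hw2 (ψ k)) x hxt
    have : (t : EReal) < u x := hRbig x (mem_sphere_zero_iff_norm.mp hxmem).ge
    exact absurd hxK (not_le.2 this)
  -- direction 1 : approximating sets eventually near K
  have dir1 : ∀ ε : ℝ, 0 < ε → ∀ᶠ m in atTop,
      ∀ z : E, uN m z ≤ (t : EReal) → ∃ y ∈ K, dist z y ≤ ε := by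
    intro ε hε
    by_contra hcon
    rw [Filter.not_eventually] at hcon
    have hfreq : ∃ᶠ m in atTop, (∃ z : E, uN m z ≤ (t : EReal) ∧ ∀ y ∈ K, ε < dist z y) ∧
        ∀ z : E, uN m z ≤ (t : EReal) → ‖z‖ < R := by
      apply (hcon.mono ?_).and_eventually hbd
      intro m hm
      push_neg at hm
      obtain ⟨z, hz1, hz2⟩ := hm
      exact ⟨z, hz1, fun y hy => hz2 y hy⟩
    obtain ⟨φ, hφ, hP⟩ := extraction_of_frequently_atTop hfreq
    choose z hz1 hz2 using fun k => (hP k).1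
    have hzball : ∀ k, z k ∈ Metric.closedBall (0:E) R := by
      intro k
      rw [Metric.mem_closedBall, dist_zero_right]
      exact ((hP k).2 (z k) (hz1 k)).le
    obtain ⟨x, _, ψ, hψ, hxt⟩ := (isCompact_closedBall (0:E) R).tendsto_subseq hzball
    have hxK : x ∈ K := limpt (φ ∘ ψ) (z ∘ ψ) (hφ.comp hψ) (fun k => hz1 (ψ k)) x hxt
    have hlim : Tendsto (fun k => dist (z (ψ k)) x) atTop (nhds 0) :=
      tendsto_iff_dist_tendsto_zero.1 hxt
    have : ∀ᶠ k in atTop, dist (z (ψ k)) x < ε := hlim.eventually_lt_const hε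
    obtain ⟨k, hk⟩ := this.exists
    exact absurd hk (not_lt.2 (hz2 (ψ k) x hxK).le)
  -- K is compact
  have hKclosed : IsClosed K := hlsc.isClosed_preimage (t : EReal)
  have hKcomp : IsCompact K :=
    (isCompact_closedBall (0:E) R).of_isClosed_subset hKclosed hKR
  -- points with value < t are dense in K
  have hdense : ∀ y ∈ K, ∀ ε : ℝ, 0 < ε → ∃ p : E, u p < (t : EReal) ∧ dist p y < ε := by
    intro y hy ε hε
    obtain ⟨s, hs1, hs2⟩ := EReal.exists_between_coe_real hp₀
    have hs2' : s < t := by exact_mod_cast hs2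
    set θ : ℝ := min 1 (ε / (dist p₀ y + 1)) with hθdef
    have hd1 : (0:ℝ) < dist p₀ y + 1 := by positivity
    have hθ0 : 0 < θ := lt_min one_pos (by positivity)
    have hθ1 : θ ≤ 1 := min_le_left _ _
    refine ⟨y + θ • (p₀ - y), ?_, ?_⟩
    · -- epigraph convexity with endpoints (y, t) and (p₀, s)
      have hmem : ((y, t) : E × ℝ) + θ • ((p₀, s) - (y, t)) ∈ epiSet u := by
        apply hconv.segment_subset (x := (y, t)) (y := (p₀, s)) hy hs1.le
        rw [segment_eq_image']
        exact ⟨θ, ⟨hθ0.le, hθ1⟩, rfl⟩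
      have heq : ((y, t) : E × ℝ) + θ • ((p₀, s) - (y, t)) = (y + θ • (p₀ - y), t + θ * (s - t)) := by
        ext <;> simp [Prod.smul_def] <;> ring
      rw [heq] at hmem
      refine lt_of_le_of_lt hmem ?_
      have : t + θ * (s - t) < t := by nlinarith
      exact_mod_cast this
    · have : dist (y + θ • (p₀ - y)) y = θ * dist p₀ y := by
        rw [dist_eq_norm]
        simp [norm_smul, abs_of_nonneg hθ0.le, dist_eq_norm, norm_sub_rev]
      rw [this]
      calc θ * dist p₀ y ≤ (ε / (dist p₀ y + 1)) * dist p₀ y := by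
            apply mul_le_mul_of_nonneg_right (min_le_right _ _) dist_nonneg
        _ < ε := by
            rw [div_mul_eq_mul_div, div_lt_iff₀ hd1]
            nlinarith [dist_nonneg (x := p₀) (y := y)]
  -- direction 2 : K eventually near approximating sets
  have dir2 : ∀ ε : ℝ, 0 < ε → ∀ᶠ m in atTop,
      ∀ y ∈ K, ∃ z : E, uN m z ≤ (t : EReal) ∧ dist z y ≤ ε := by
    intro ε hε
    -- cover K by finitely many balls of radius ε/2 around points with value < t
    have hcover : K ⊆ ⋃ p : {p : E // u p < (t : EReal)}, Metric.ball (p : E) (ε/2) := by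
      intro y hy
      obtain ⟨p, hp1, hp2⟩ := hdense y hy (ε/2) (by linarith)
      exact Set.mem_iUnion.2 ⟨⟨p, hp1⟩, by rwa [Metric.mem_ball, dist_comm]⟩
    obtain ⟨F, hF⟩ := hKcomp.elim_finite_subcover
      (fun p : {p : E // u p < (t : EReal)} => Metric.ball (p : E) (ε/2))
      (fun _ => Metric.isOpen_ball) hcover
    -- for each center, an eventual approximating point
    have hev : ∀ᶠ m in atTop, ∀ p ∈ F, ∃ z : E, uN m z ≤ (t : EReal) ∧
        dist z (p : E) ≤ ε/2 := by
      rw [Filter.eventually_all_finset]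
      intro p _
      obtain ⟨q, hq1, hq2⟩ := key (p : E) p.2
      have : Tendsto (fun m => dist (q m) (p : E)) atTop (nhds 0) :=
        tendsto_iff_dist_tendsto_zero.1 hq1
      filter_upwards [hq2, this.eventually_le_const (by linarith : (0:ℝ) < ε/2)] with m h1 h2
      exact ⟨q m, h1, h2⟩
    filter_upwards [hev] with m hm y hy
    obtain ⟨p, hpF, hyp⟩ := Set.mem_iUnion₂.1 (hF hy)
    obtain ⟨z, hz1, hz2⟩ := hm p hpF
    refine ⟨z, hz1, ?_⟩
    have : dist y (p : E) < ε/2 := hyp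
    calc dist z y ≤ dist z (p : E) + dist (p : E) y := dist_triangle _ _ _
      _ ≤ ε/2 + ε/2 := by rw [dist_comm (p : E) y]; linarith
      _ = ε := by ring
  -- conclusion
  rw [Metric.tendsto_atTop]
  intro ε hε
  obtain ⟨N, hN⟩ := Filter.eventually_atTop.1 ((dir1 (ε/3) (by linarith)).and (dir2 (ε/3) (by linarith)))
  refine ⟨N, fun m hm => ?_⟩
  have hd : Metric.hausdorffDist {x | uN m x ≤ (t : EReal)} K ≤ ε/3 := by
    apply Metric.hausdorffDist_le_of_mem_dist (by linarith)
    · exact fun x hx => (hN m hm).1 x hx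
    · intro y hy
      obtain ⟨z, hz1, hz2⟩ := (hN m hm).2 y hy
      exact ⟨z, hz1, by rw [dist_comm]; exact hz2⟩
  rw [Real.dist_eq, sub_zero, abs_of_nonneg Metric.hausdorffDist_nonneg]
  exact lt_of_le_of_lt hd (by linarith)
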